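/- A graph is a split graph if and only if it contains no induced subgraph isomorphic to C4, C5, or 2K2. -/

import Mathlib

open SimpleGraph

variable {V : Type*}

/-- `I` is an independent set in `G`. -/
def IndepOn (G : SimpleGraph V) (I : Set V) : Prop :=
  ∀ ⦃u⦄, u ∈ I → ∀ ⦃v⦄, v ∈ I → ¬ G.Adj u v

/-- `(K, I)` is a split partition of `G`: `K` a clique, `I` independent,
partitioning the vertex set. -/
def SplitPartition (G : SimpleGraph V) (K I : Set V) : Prop :=
  Disjoint K I ∧ K ∪ I = Set.univ ∧ G.IsClique K ∧ IndepOn G I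

/-- The disjoint union of two edges, `2K_2`, as a graph on `Fin 4`. -/
def twoK2 : SimpleGraph (Fin 4) where
  Adj u v := (u = 0 ∧ v = 1) ∨ (u = 1 ∧ v = 0) ∨ (u = 2 ∧ v = 3) ∨ (u = 3 ∧ v = 2)
  symm := by
    constructor
    intro u v h
    fin_cases u <;> fin_cases v <;> simp_all
  loopless := by
    constructor
    intro u h
    fin_cases u <;> simp_all

section Aux

variable {G : SimpleGraph V} {W : Type*}

lemma c4_emb {a b c d : V} (hab : G.Adj a b) (hbc : G.Adj b c) (hcd : G.Adj c d)
    (hda : G.Adj d a) (hac : ¬ G.Adj a c) (hbd : ¬ G.Adj b d)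
    (hac' : a ≠ c) (hbd' : b ≠ d) : Nonempty (cycleGraph 4 ↪g G) := by
  have nab := hab.ne; have nbc := hbc.ne; have ncd := hcd.ne; have nda := hda.ne
  have hba := hab.symm; have hcb := hbc.symm; have hdc := hcd.symm; have had := hda.symm
  have hca : ¬ G.Adj c a := fun h => hac h.symm
  have hdb : ¬ G.Adj d b := fun h => hbd h.symm
  refine ⟨⟨⟨![a,b,c,d], ?_⟩, ?_⟩⟩
  · intro u v h
    fin_cases u <;> fin_cases v <;> simp_all
  · intro u v
    change G.Adj (![a,b,c,d] u) (![a,b,c,d] v) ↔ _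
    fin_cases u <;> fin_cases v <;> simp_all [cycleGraph_adj] <;> decide

lemma c5_emb {a b c d e : V} (hab : G.Adj a b) (hbc : G.Adj b c) (hcd : G.Adj c d)
    (hde : G.Adj d e) (hea : G.Adj e a)
    (hac : ¬ G.Adj a c) (hbd : ¬ G.Adj b d) (hce : ¬ G.Adj c e)
    (hda : ¬ G.Adj d a) (heb : ¬ G.Adj e b)
    (hac' : a ≠ c) (hbd' : b ≠ d) (hce' : c ≠ e) (hda' : d ≠ a) (heb' : e ≠ b) :
    Nonempty (cycleGraph 5 ↪g G) := by
  have nab := hab.ne; have nbc := hbc.ne; have ncd := hcd.ne; have nde := hde.ne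
  have nea := hea.ne
  have hba := hab.symm; have hcb := hbc.symm; have hdc := hcd.symm
  have hed := hde.symm; have hae := hea.symm
  have hca : ¬ G.Adj c a := fun h => hac h.symm
  have hdb : ¬ G.Adj d b := fun h => hbd h.symm
  have hec : ¬ G.Adj e c := fun h => hce h.symm
  have had : ¬ G.Adj a d := fun h => hda h.symm
  have hbe : ¬ G.Adj b e := fun h => heb h.symm
  refine ⟨⟨⟨![a,b,c,d,e], ?_⟩, ?_⟩⟩
  · intro u v h
    fin_cases u <;> fin_cases v <;> simp_all
  · intro u v
    change G.Adj (![a,b,c,d,e] u) (![a,b,c,d,e] v) ↔ _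
    fin_cases u <;> fin_cases v <;> simp_all [cycleGraph_adj] <;> decide

lemma twoK2_emb {a b c d : V} (hab : G.Adj a b) (hcd : G.Adj c d)
    (hac : ¬ G.Adj a c) (had : ¬ G.Adj a d) (hbc : ¬ G.Adj b c) (hbd : ¬ G.Adj b d)
    (hac' : a ≠ c) (had' : a ≠ d) (hbc' : b ≠ c) (hbd' : b ≠ d) :
    Nonempty (twoK2 ↪g G) := by
  have nab := hab.ne; have ncd := hcd.ne
  have hba := hab.symm; have hdc := hcd.symm
  have hca : ¬ G.Adj c a := fun h => hac h.symm
  have hda : ¬ G.Adj d a := fun h => had h.symm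
  have hcb : ¬ G.Adj c b := fun h => hbc h.symm
  have hdb : ¬ G.Adj d b := fun h => hbd h.symm
  refine ⟨⟨⟨![a,b,c,d], ?_⟩, ?_⟩⟩
  · intro u v h
    fin_cases u <;> fin_cases v <;> simp_all
  · intro u v
    change G.Adj (![a,b,c,d] u) (![a,b,c,d] v) ↔ _
    fin_cases u <;> fin_cases v <;> simp_all [twoK2]

lemma splitPartition_pullback {H : SimpleGraph W} (f : H ↪g G)
    {K I : Set V} (h : SplitPartition G K I) :
    SplitPartition H (f ⁻¹' K) (f ⁻¹' I) := by
  obtain ⟨hdis, huniv, hK, hI⟩ := h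
  refine ⟨hdis.preimage f, ?_, ?_, ?_⟩
  · rw [← Set.preimage_union, huniv, Set.preimage_univ]
  · intro u hu v hv huv
    exact f.map_adj_iff.mp (hK hu hv fun h => huv (f.injective h))
  · intro u hu v hv hadj
    exact hI hu hv (f.map_adj_iff.mpr hadj)

lemma no_split_c4 : ¬ ∃ K I : Set (Fin 4), SplitPartition (cycleGraph 4) K I := by
  rintro ⟨K, I, hdis, huniv, hK, hI⟩
  have hm : ∀ v : Fin 4, v ∈ K ∨ v ∈ I := fun v =>
    (huniv ▸ Set.mem_univ v : v ∈ K ∪ I)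
  have nK02 : ¬((0:Fin 4) ∈ K ∧ (2:Fin 4) ∈ K) :=
    fun ⟨a, b⟩ => (by decide : ¬ (cycleGraph 4).Adj 0 2) (hK a b (by decide))
  have nK13 : ¬((1:Fin 4) ∈ K ∧ (3:Fin 4) ∈ K) :=
    fun ⟨a, b⟩ => (by decide : ¬ (cycleGraph 4).Adj 1 3) (hK a b (by decide))
  have nI01 : ¬((0:Fin 4) ∈ I ∧ (1:Fin 4) ∈ I) := fun ⟨a, b⟩ => hI a b (by decide)
  have nI12 : ¬((1:Fin 4) ∈ I ∧ (2:Fin 4) ∈ I) := fun ⟨a, b⟩ => hI a b (by decide)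
  have nI23 : ¬((2:Fin 4) ∈ I ∧ (3:Fin 4) ∈ I) := fun ⟨a, b⟩ => hI a b (by decide)
  have nI30 : ¬((3:Fin 4) ∈ I ∧ (0:Fin 4) ∈ I) := fun ⟨a, b⟩ => hI a b (by decide)
  have h0 := hm 0; have h1 := hm 1; have h2 := hm 2; have h3 := hm 3
  tauto

lemma no_split_c5 : ¬ ∃ K I : Set (Fin 5), SplitPartition (cycleGraph 5) K I := by
  rintro ⟨K, I, hdis, huniv, hK, hI⟩
  have hm : ∀ v : Fin 5, v ∈ K ∨ v ∈ I := fun v =>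
    (huniv ▸ Set.mem_univ v : v ∈ K ∪ I)
  have nK02 : ¬((0:Fin 5) ∈ K ∧ (2:Fin 5) ∈ K) :=
    fun ⟨a, b⟩ => (by decide : ¬ (cycleGraph 5).Adj 0 2) (hK a b (by decide))
  have nK03 : ¬((0:Fin 5) ∈ K ∧ (3:Fin 5) ∈ K) :=
    fun ⟨a, b⟩ => (by decide : ¬ (cycleGraph 5).Adj 0 3) (hK a b (by decide))
  have nK13 : ¬((1:Fin 5) ∈ K ∧ (3:Fin 5) ∈ K) :=
    fun ⟨a, b⟩ => (by decide : ¬ (cycleGraph 5).Adj 1 3) (hK a b (by decide))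
  have nK14 : ¬((1:Fin 5) ∈ K ∧ (4:Fin 5) ∈ K) :=
    fun ⟨a, b⟩ => (by decide : ¬ (cycleGraph 5).Adj 1 4) (hK a b (by decide))
  have nK24 : ¬((2:Fin 5) ∈ K ∧ (4:Fin 5) ∈ K) :=
    fun ⟨a, b⟩ => (by decide : ¬ (cycleGraph 5).Adj 2 4) (hK a b (by decide))
  have nI01 : ¬((0:Fin 5) ∈ I ∧ (1:Fin 5) ∈ I) := fun ⟨a, b⟩ => hI a b (by decide)
  have nI12 : ¬((1:Fin 5) ∈ I ∧ (2:Fin 5) ∈ I) := fun ⟨a, b⟩ => hI a b (by decide)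
  have nI23 : ¬((2:Fin 5) ∈ I ∧ (3:Fin 5) ∈ I) := fun ⟨a, b⟩ => hI a b (by decide)
  have nI34 : ¬((3:Fin 5) ∈ I ∧ (4:Fin 5) ∈ I) := fun ⟨a, b⟩ => hI a b (by decide)
  have nI40 : ¬((4:Fin 5) ∈ I ∧ (0:Fin 5) ∈ I) := fun ⟨a, b⟩ => hI a b (by decide)
  have h0 := hm 0; have h1 := hm 1; have h2 := hm 2; have h3 := hm 3; have h4 := hm 4
  rcases h0 with h0|h0 <;> rcases h1 with h1|h1 <;> rcases h2 with h2|h2 <;>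
    rcases h3 with h3|h3 <;> rcases h4 with h4|h4 <;>
    first
    | exact nK02 ⟨h0,h2⟩ | exact nK03 ⟨h0,h3⟩ | exact nK13 ⟨h1,h3⟩
    | exact nK14 ⟨h1,h4⟩ | exact nK24 ⟨h2,h4⟩
    | exact nI01 ⟨h0,h1⟩ | exact nI12 ⟨h1,h2⟩ | exact nI23 ⟨h2,h3⟩
    | exact nI34 ⟨h3,h4⟩ | exact nI40 ⟨h4,h0⟩

instance : DecidableRel twoK2.Adj := fun u v =>
  inferInstanceAs (Decidable ((u = 0 ∧ v = 1) ∨ (u = 1 ∧ v = 0) ∨ (u = 2 ∧ v = 3) ∨ (u = 3 ∧ v = 2)))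

lemma no_split_twoK2 : ¬ ∃ K I : Set (Fin 4), SplitPartition twoK2 K I := by
  rintro ⟨K, I, hdis, huniv, hK, hI⟩
  have hm : ∀ v : Fin 4, v ∈ K ∨ v ∈ I := fun v =>
    (huniv ▸ Set.mem_univ v : v ∈ K ∪ I)
  have nK02 : ¬((0:Fin 4) ∈ K ∧ (2:Fin 4) ∈ K) :=
    fun ⟨a, b⟩ => (by decide : ¬ twoK2.Adj 0 2) (hK a b (by decide))
  have nK03 : ¬((0:Fin 4) ∈ K ∧ (3:Fin 4) ∈ K) :=
    fun ⟨a, b⟩ => (by decide : ¬ twoK2.Adj 0 3) (hK a b (by decide))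
  have nK12 : ¬((1:Fin 4) ∈ K ∧ (2:Fin 4) ∈ K) :=
    fun ⟨a, b⟩ => (by decide : ¬ twoK2.Adj 1 2) (hK a b (by decide))
  have nK13 : ¬((1:Fin 4) ∈ K ∧ (3:Fin 4) ∈ K) :=
    fun ⟨a, b⟩ => (by decide : ¬ twoK2.Adj 1 3) (hK a b (by decide))
  have nI01 : ¬((0:Fin 4) ∈ I ∧ (1:Fin 4) ∈ I) := fun ⟨a, b⟩ => hI a b (by decide)
  have nI23 : ¬((2:Fin 4) ∈ I ∧ (3:Fin 4) ∈ I) := fun ⟨a, b⟩ => hI a b (by decide)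
  have h0 := hm 0; have h1 := hm 1; have h2 := hm 2; have h3 := hm 3
  tauto

/-- Number of (ordered) adjacent pairs outside `K`. -/
def mEdges (G : SimpleGraph V) [Fintype V] [DecidableEq V] [DecidableRel G.Adj]
    (K : Finset V) : ℕ :=
  (Finset.univ.filter fun p : V × V => p.1 ∉ K ∧ p.2 ∉ K ∧ G.Adj p.1 p.2).card

lemma core_lemma [Fintype V] [DecidableEq V] [DecidableRel G.Adj]
    (hc4 : ¬ Nonempty (cycleGraph 4 ↪g G)) (hc5 : ¬ Nonempty (cycleGraph 5 ↪g G))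
    (h2k2 : ¬ Nonempty (twoK2 ↪g G))
    (K : Finset V) (hK : G.IsClique ↑K)
    (hmax : ∀ K' : Finset V, G.IsClique ↑K' → K'.card ≤ K.card)
    (hmin : ∀ K' : Finset V, G.IsClique ↑K' → K'.card = K.card →
      mEdges G K ≤ mEdges G K')
    (x y : V) (hx : x ∉ K) (hy : y ∉ K) (hxy : G.Adj x y)
    (hAB : ∀ z ∈ K, ¬ G.Adj x z → ¬ G.Adj y z) : False := by
  have hxy' : x ≠ y := hxy.ne
  -- x has a non-neighbor in K
  have hAx : ∃ z ∈ K, ¬ G.Adj x z := by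
    by_contra h
    push_neg at h
    have hcl : G.IsClique ↑(insert x K) := by
      rw [Finset.coe_insert]
      exact hK.insert fun b hb _ => h b hb
    have := hmax _ hcl
    rw [Finset.card_insert_of_notMem hx] at this
    omega
  -- x has a unique non-neighbor in K
  have huniq : ∀ z₁ ∈ K, ∀ z₂ ∈ K, ¬ G.Adj x z₁ → ¬ G.Adj x z₂ → z₁ = z₂ := by
    intro z₁ h1 z₂ h2 n1 n2
    by_contra hne
    have hz12 : G.Adj z₁ z₂ := hK h1 h2 hne
    exact h2k2 (twoK2_emb hxy hz12 n1 n2 (hAB z₁ h1 n1) (hAB z₂ h2 n2)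
      (fun h => hx (h ▸ h1)) (fun h => hx (h ▸ h2))
      (fun h => hy (h ▸ h1)) (fun h => hy (h ▸ h2)))
  obtain ⟨z, hzK, hzx⟩ := hAx
  have hzy : ¬ G.Adj y z := hAB z hzK hzx
  have hxz_all : ∀ v ∈ K, v ≠ z → G.Adj x v := by
    intro v hv hne
    by_contra h
    exact hne (huniq v hv z hzK h hzx)
  have hxnez : x ≠ z := fun h => hx (h ▸ hzK)
  have hynez : y ≠ z := fun h => hy (h ▸ hzK)
  have hKpos : 1 ≤ K.card := Finset.card_pos.mpr ⟨z, hzK⟩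
  -- the clique K' = insert x (K.erase z)
  have hK'cl : G.IsClique ↑(insert x (K.erase z)) := by
    rw [Finset.coe_insert]
    refine (hK.subset (by exact_mod_cast Finset.erase_subset z K)).insert ?_
    intro b hb _
    simp only [Finset.coe_erase, Set.mem_diff, Finset.mem_coe, Set.mem_singleton_iff] at hb
    exact hxz_all b hb.1 hb.2
  have hxK'mem : x ∉ K.erase z := fun h => hx (Finset.mem_of_mem_erase h)
  have hK'card : (insert x (K.erase z)).card = K.card := by
    rw [Finset.card_insert_of_notMem hxK'mem, Finset.card_erase_of_mem hzK]
    omega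
  -- y has a non-neighbor v ≠ z in K
  have hvex : ∃ v ∈ K, v ≠ z ∧ ¬ G.Adj y v := by
    by_contra h
    push_neg at h
    have hcl2 : G.IsClique ↑(insert y (insert x (K.erase z))) := by
      rw [Finset.coe_insert]
      refine hK'cl.insert ?_
      intro b hb hbny
      simp only [Finset.coe_insert, Set.mem_insert_iff, Finset.mem_coe,
        Finset.mem_erase] at hb
      rcases hb with rfl | ⟨hbz, hbK⟩
      · exact hxy.symm
      · exact h b hbK hbz
    have hcard2 : (insert y (insert x (K.erase z))).card = K.card + 1 := by
      rw [Finset.card_insert_of_notMem, hK'card]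
      simp only [Finset.mem_insert, Finset.mem_erase, not_or]
      exact ⟨fun h => hxy' h.symm, fun h => hy h.2⟩
    have := hmax _ hcl2
    omega
  obtain ⟨v, hvK, hvz, hyv⟩ := hvex
  have hxv : G.Adj x v := hxz_all v hvK hvz
  have hzv : G.Adj z v := hK hzK hvK (Ne.symm hvz)
  have hmK := hmin _ hK'cl hK'card
  -- find w outside K, w ≠ x, adjacent to z but not to x
  have hwex : ∃ w, w ∉ K ∧ w ≠ x ∧ G.Adj z w ∧ ¬ G.Adj x w := by
    by_contra hcon
    push_neg at hcon
    set K' := insert x (K.erase z) with hK'def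
    set φ : V × V → V × V :=
      fun p => (if p.1 = z then x else p.1, if p.2 = z then x else p.2) with hφ
    set A := Finset.univ.filter fun p : V × V => p.1 ∉ K ∧ p.2 ∉ K ∧ G.Adj p.1 p.2 with hA
    set A' := Finset.univ.filter
      fun p : V × V => p.1 ∉ K' ∧ p.2 ∉ K' ∧ G.Adj p.1 p.2 with hA'
    have hnotK' : ∀ w : V, w ∉ K' ↔ (w ≠ x ∧ (w = z ∨ w ∉ K)) := by
      intro w
      simp only [hK'def, Finset.mem_insert, Finset.mem_erase, not_or, not_and_or,
        not_not]
    -- component map behaves well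
    have hcomp : ∀ w : V, w ∉ K' → (if w = z then x else w) ∉ K := by
      intro w hw
      rw [hnotK'] at hw
      split
      · exact hx
      · rcases hw.2 with h | h
        · exact absurd h (by assumption)
        · exact h
    have himg : A'.image φ ⊆ A.erase (x, y) := by
      intro p hp
      simp only [Finset.mem_image] at hp
      obtain ⟨q, hq, rfl⟩ := hp
      simp only [hA', Finset.mem_filter, Finset.mem_univ, true_and] at hq
      obtain ⟨hq1, hq2, hqadj⟩ := hq
      have hq1x : q.1 ≠ x := ((hnotK' q.1).mp hq1).1
      have hq2x : q.2 ≠ x := ((hnotK' q.2).mp hq2).1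
      have hadj' : G.Adj (if q.1 = z then x else q.1) (if q.2 = z then x else q.2) := by
        split
        · split
          · next h1 h2 =>
            rw [h1, h2] at hqadj
            exact absurd hqadj (G.loopless.irrefl z)
          · next h1 h2 =>
            have hq2K : q.2 ∉ K := by
              rcases ((hnotK' q.2).mp hq2).2 with h | h
              · exact absurd h h2
              · exact h
            refine hcon q.2 hq2K hq2x ?_
            rw [← h1]; exact hqadj
        · split
          · next h1 h2 =>
            have hq1K : q.1 ∉ K := by
              rcases ((hnotK' q.1).mp hq1).2 with h | h
              · exact absurd h h1
              · exact h
            refine (hcon q.1 hq1K hq1x ?_).symm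
            rw [← h2]; exact hqadj.symm
          · exact hqadj
      have hmemA : φ q ∈ A := by
        simp only [hA, Finset.mem_filter, Finset.mem_univ, true_and, hφ]
        exact ⟨hcomp q.1 hq1, hcomp q.2 hq2, hadj'⟩
      refine Finset.mem_erase.mpr ⟨?_, hmemA⟩
      intro heq
      have h1 : (if q.1 = z then x else q.1) = x := congrArg Prod.fst heq
      have h2 : (if q.2 = z then x else q.2) = y := congrArg Prod.snd heq
      have hq1z : q.1 = z := by
        by_contra h
        rw [if_neg h] at h1
        exact hq1x h1
      have hq2y : q.2 = y := by
        by_cases h2z : q.2 = z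
        · rw [if_pos h2z] at h2
          exact absurd h2 hxy'
        · rwa [if_neg h2z] at h2
      rw [hq1z, hq2y] at hqadj
      exact hzy hqadj.symm
    have hrinj : ∀ a b : V, a ≠ x → b ≠ x →
        (if a = z then x else a) = (if b = z then x else b) → a = b := by
      intro a b ha hb h
      split at h
      · split at h
        · next h1 h2 => rw [h1, h2]
        · exact absurd h.symm hb
      · split at h
        · exact absurd h ha
        · exact h
    have hinj : Set.InjOn φ ↑A' := by
      intro p hp q hq heq
      simp only [Finset.mem_coe, hA', Finset.mem_filter] at hp hq
      have hp1x : p.1 ≠ x := ((hnotK' p.1).mp hp.2.1).1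
      have hp2x : p.2 ≠ x := ((hnotK' p.2).mp hp.2.2.1).1
      have hq1x : q.1 ≠ x := ((hnotK' q.1).mp hq.2.1).1
      have hq2x : q.2 ≠ x := ((hnotK' q.2).mp hq.2.2.1).1
      have h1 := congrArg Prod.fst heq
      have h2 := congrArg Prod.snd heq
      simp only [hφ] at h1 h2
      exact Prod.ext (hrinj _ _ hp1x hq1x h1) (hrinj _ _ hp2x hq2x h2)
    have hxyA : (x, y) ∈ A := by
      simp only [hA, Finset.mem_filter, Finset.mem_univ, true_and]
      exact ⟨hx, hy, hxy⟩
    have hle : A'.card ≤ A.card - 1 := by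
      calc A'.card = (A'.image φ).card := (Finset.card_image_of_injOn hinj).symm
        _ ≤ (A.erase (x, y)).card := Finset.card_le_card himg
        _ = A.card - 1 := Finset.card_erase_of_mem hxyA
    have hApos : 1 ≤ A.card := Finset.card_pos.mpr ⟨(x, y), hxyA⟩
    have : mEdges G K = A.card := rfl
    have h2 : mEdges G K' = A'.card := rfl
    omega
  obtain ⟨w, hwK, hwx, hzw, hxw⟩ := hwex
  have hwy : w ≠ y := fun h => hzy (h ▸ hzw).symm
  have hwv : w ≠ v := fun h => hwK (h ▸ hvK)
  have hxznadj : ¬ G.Adj z x := fun h => hzx h.symm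
  have hyznadj : ¬ G.Adj y z := hzy
  by_cases hyw : G.Adj y w
  · by_cases hvw : G.Adj v w
    · -- C4 on x, y, w, v
      exact hc4 (c4_emb hxy hyw hvw.symm hxv.symm hxw hyv
        (Ne.symm hwx) (fun h => hy (h ▸ hvK)))
    · -- C5 on x, y, w, z, v
      exact hc5 (c5_emb hxy hyw hzw.symm hzv hxv.symm
        hxw hzy (fun h => hvw h.symm) hxznadj (fun h => hyv h.symm)
        (Ne.symm hwx) hynez hwv (Ne.symm hxnez)
        (fun h => hy (h ▸ hvK) : v ≠ y))
  · -- 2K2 on {x, y} and {z, w}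
    exact h2k2 (twoK2_emb hxy hzw hzx hxw hzy hyw
      hxnez (Ne.symm hwx) hynez (Ne.symm hwy))

end Aux

/-- A graph is a split graph iff it has no induced `C₄`, `C₅`, or `2K₂`. -/
theorem split_iff_forbidden [Fintype V] (G : SimpleGraph V) :
    (∃ K I : Set V, SplitPartition G K I) ↔
      ¬ Nonempty (cycleGraph 4 ↪g G) ∧ ¬ Nonempty (cycleGraph 5 ↪g G) ∧
        ¬ Nonempty (twoK2 ↪g G) := by
  constructor
  · rintro ⟨K, I, h⟩
    refine ⟨?_, ?_, ?_⟩
    · rintro ⟨f⟩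
      exact no_split_c4 ⟨_, _, splitPartition_pullback f h⟩
    · rintro ⟨f⟩
      exact no_split_c5 ⟨_, _, splitPartition_pullback f h⟩
    · rintro ⟨f⟩
      exact no_split_twoK2 ⟨_, _, splitPartition_pullback f h⟩
  · rintro ⟨hc4, hc5, h2k2⟩
    classical
    -- choose a maximum clique minimizing edges outside
    have hne : (Finset.univ.filter fun K : Finset V => G.IsClique ↑K).Nonempty :=
      ⟨∅, Finset.mem_filter.mpr ⟨Finset.mem_univ _, by simp⟩⟩
    obtain ⟨K₀, hK₀mem, hK₀max⟩ := Finset.exists_max_image _ Finset.card hne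
    simp only [Finset.mem_filter, Finset.mem_univ, true_and] at hK₀mem
    have hne2 : ((Finset.univ.filter fun K : Finset V => G.IsClique ↑K).filter
        fun K => K.card = K₀.card).Nonempty := by
      exact ⟨K₀, Finset.mem_filter.mpr
        ⟨Finset.mem_filter.mpr ⟨Finset.mem_univ _, hK₀mem⟩, rfl⟩⟩
    obtain ⟨K, hKmem, hKmin⟩ := Finset.exists_min_image _ (mEdges G) hne2
    simp only [Finset.mem_filter, Finset.mem_univ, true_and] at hKmem
    obtain ⟨hK, hKcard⟩ := hKmem
    have hmax : ∀ K' : Finset V, G.IsClique ↑K' → K'.card ≤ K.card := by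
      intro K' h
      rw [hKcard]
      exact hK₀max K' (Finset.mem_filter.mpr ⟨Finset.mem_univ _, h⟩)
    have hmin : ∀ K' : Finset V, G.IsClique ↑K' → K'.card = K.card →
        mEdges G K ≤ mEdges G K' := by
      intro K' h hc
      exact hKmin K' (Finset.mem_filter.mpr
        ⟨Finset.mem_filter.mpr ⟨Finset.mem_univ _, h⟩, by rw [hc, hKcard]⟩)
    refine ⟨↑K, (↑K : Set V)ᶜ, disjoint_compl_right, Set.union_compl_self _, hK, ?_⟩
    intro u hu v hv hadj
    have hu' : u ∉ K := hu
    have hv' : v ∉ K := hv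
    by_cases hc : ∀ z ∈ K, ¬ G.Adj u z → ¬ G.Adj v z
    · exact core_lemma hc4 hc5 h2k2 K hK hmax hmin u v hu' hv' hadj hc
    · push_neg at hc
      obtain ⟨z₁, hz1K, hz1u, hz1v⟩ := hc
      by_cases hc' : ∀ z ∈ K, ¬ G.Adj v z → ¬ G.Adj u z
      · exact core_lemma hc4 hc5 h2k2 K hK hmax hmin v u hv' hu' hadj.symm hc'
      · push_neg at hc'
        obtain ⟨z₂, hz2K, hz2v, hz2u⟩ := hc'
        have hne12 : z₁ ≠ z₂ := fun h => hz2v (h ▸ hz1v)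
        have h12 : G.Adj z₁ z₂ := hK hz1K hz2K hne12
        exact hc4 (c4_emb hadj hz1v h12 hz2u.symm hz1u hz2v
          (fun h => hu' (h ▸ hz1K)) (fun h => hv' (h ▸ hz2K)))
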